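/- arXiv:2409.13096 — 5 statements merged into one kernel-verified Lean document; each statement's English description precedes it below -/
import Mathlib

section
/- Let 𝒟 be a distribution on 𝔽₂ⁿ and ℓ ≥ 2. Let 𝒟_{⊕ℓ} be the distribution on (𝔽₂^ℓ)ⁿ obtained by sampling x ∼ 𝒟 and then, independently for each i ∈ [n], sampling y⁽ⁱ⁾ uniformly among strings in 𝔽₂^ℓ whose coordinates sum to x_i. Then for every set R of coordinates of (𝔽₂^ℓ)ⁿ (viewed as [nℓ]) and every assignment r ∈ 𝔽₂^{|R|}, Pr_{y∼𝒟_{⊕ℓ}}[y_R = r] ≤ 2^{−|R|(1−1/ℓ)}. -/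
open Finset
open scoped Classical

/-- A probability distribution given by a weight function on a finite type. -/
def IsDist {α : Type*} [Fintype α] (μ : α → ℝ) : Prop :=
  (∀ a, 0 ≤ μ a) ∧ ∑ a, μ a = 1

/-- Probability of an event under a weight function. -/
noncomputable def pr {α : Type*} [Fintype α] (μ : α → ℝ) (P : α → Prop) : ℝ :=
  ∑ a ∈ univ.filter P, μ a

/-- 𝔽₂-valued parity χ_S. -/
def chi2 {ι : Type*} (S : Finset ι) (x : ι → ZMod 2) : ZMod 2 :=
  ∑ i ∈ S, x i

/-- ±1-valued parity χ_S. -/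
noncomputable def chi {ι : Type*} (S : Finset ι) (x : ι → ZMod 2) : ℝ :=
  ∏ i ∈ S, (-1 : ℝ) ^ (x i).val

/-- Blockwise parity: (𝔽₂^ℓ)ⁿ → 𝔽₂ⁿ. -/
def blockPar {n ℓ : ℕ} (y : Fin n × Fin ℓ → ZMod 2) : Fin n → ZMod 2 :=
  fun i => ∑ j, y (i, j)

/-- The parity-substituted distribution 𝒟_{⊕ℓ}: each block is uniform among the
2^(ℓ-1) strings with the prescribed block parity. -/
noncomputable def parSub {n ℓ : ℕ} (μ : (Fin n → ZMod 2) → ℝ)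
    (y : Fin n × Fin ℓ → ZMod 2) : ℝ :=
  μ (blockPar y) / 2 ^ ((ℓ - 1) * n)

/-- A function has Fourier degree at most `D`. -/
noncomputable def HasDegLE {ι : Type*} [Fintype ι] (h : (ι → ZMod 2) → ℝ) (D : ℕ) : Prop :=
  ∃ c : Finset ι → ℝ, (∀ S, c S ≠ 0 → S.card ≤ D) ∧
    ∀ x, h x = ∑ S : Finset ι, c S * chi S x

/-- Binary decision trees querying coordinates indexed by `ι`. -/
inductive DTree (ι : Type*) where
  | leaf : Bool → DTree ι
  | node : ι → DTree ι → DTree ι → DTree ι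

namespace DTree

variable {ι : Type*}

/-- 𝔽₂-valued evaluation. -/
def eval : DTree ι → (ι → ZMod 2) → ZMod 2
  | leaf b, _ => if b then 1 else 0
  | node i L R, x => if x i = 1 then eval R x else eval L x

/-- ±1-valued evaluation (0 ↦ 1, 1 ↦ -1). -/
noncomputable def evalpm (T : DTree ι) (x : ι → ZMod 2) : ℝ :=
  if eval T x = 0 then 1 else -1

/-- Number of leaves. -/
def size : DTree ι → ℕ
  | leaf _ => 1
  | node _ L R => size L + size R

/-- Depth. -/
def depth : DTree ι → ℕ
  | leaf _ => 0
  | node _ L R => max (depth L) (depth R) + 1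

/-- `Truncation d T T'` : `T'` is obtained from `T` by truncating every path at
depth `d`, replacing the cut subtrees by arbitrary leaves. -/
inductive Truncation : ℕ → DTree ι → DTree ι → Prop
  | leaf (d : ℕ) (b : Bool) : Truncation d (leaf b) (leaf b)
  | cut (T : DTree ι) (b : Bool) : Truncation 0 T (leaf b)
  | node (d : ℕ) (i : ι) (L R L' R' : DTree ι) :
      Truncation d L L' → Truncation d R R' →
      Truncation (d + 1) (node i L R) (node i L' R')

/-- The collection of sets of variables queried along individual root-to-leaf paths. -/
def pathVars [DecidableEq ι] : DTree ι → Finset (Finset ι)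
  | leaf _ => {∅}
  | node i L R => (pathVars L ∪ pathVars R).image (insert i)

/-- Fourier coefficient of (the ±1 version of) a decision tree. -/
noncomputable def fourierCoeff [Fintype ι] (T : DTree ι) (S : Finset ι) : ℝ :=
  (∑ x : ι → ZMod 2, T.evalpm x * chi S x) / Fintype.card (ι → ZMod 2)

end DTree


/-- Auxiliary: per-block counting bound. -/
lemma block_card_aux {ℓ : ℕ} (Q : Finset (Fin ℓ)) (r : Fin ℓ → ZMod 2) (b : ZMod 2) :
    (univ.filter (fun v : Fin ℓ → ZMod 2 => (∑ j, v j) = b ∧ ∀ j ∈ Q, v j = r j)).card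
      ≤ 2 ^ (ℓ - 1 - min Q.card (ℓ - 1)) := by
  by_cases hQ : Q = univ
  · have h1 : (univ.filter (fun v : Fin ℓ → ZMod 2 => (∑ j, v j) = b ∧ ∀ j ∈ Q, v j = r j)).card ≤ 1 := by
      apply Finset.card_le_one.2
      intro v hv w hw
      simp only [mem_filter, hQ, mem_univ] at hv hw
      funext j
      rw [hv.2.2 j trivial, hw.2.2 j trivial]
    exact h1.trans (Nat.one_le_two_pow)
  · obtain ⟨j₀, hj₀⟩ : ∃ j₀, j₀ ∉ Q := by
      by_contra h
      push_neg at h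
      exact hQ (Finset.eq_univ_iff_forall.2 h)
    set T : Finset (Fin ℓ) := Qᶜ.erase j₀ with hT
    have hQcard : Q.card ≤ ℓ - 1 := by
      have := Finset.card_lt_card (Finset.ssubset_univ_iff.2 hQ)
      simp only [Finset.card_univ, Fintype.card_fin] at this
      omega
    have hTcard : T.card = ℓ - 1 - Q.card := by
      rw [hT, Finset.card_erase_of_mem (Finset.mem_compl.2 hj₀), Finset.card_compl]
      simp only [Fintype.card_fin]
      omega
    have hinj : ∀ v ∈ (univ.filter (fun v : Fin ℓ → ZMod 2 => (∑ j, v j) = b ∧ ∀ j ∈ Q, v j = r j)),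
        ∀ w ∈ (univ.filter (fun v : Fin ℓ → ZMod 2 => (∑ j, v j) = b ∧ ∀ j ∈ Q, v j = r j)),
        (fun (j : {j // j ∈ T}) => v j.1) = (fun (j : {j // j ∈ T}) => w j.1) → v = w := by
      intro v hv w hw hvw
      simp only [mem_filter, mem_univ, true_and] at hv hw
      have hagree : ∀ j, j ≠ j₀ → v j = w j := by
        intro j hj
        by_cases hjQ : j ∈ Q
        · rw [hv.2 j hjQ, hw.2 j hjQ]
        · exact congrFun hvw ⟨j, by simp [hT, Finset.mem_erase, hj, hjQ]⟩
      have hsum : v j₀ + ∑ j ∈ univ.erase j₀, v j = w j₀ + ∑ j ∈ univ.erase j₀, w j := by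
        rw [Finset.add_sum_erase _ v (mem_univ j₀), Finset.add_sum_erase _ w (mem_univ j₀),
          hv.1, hw.1]
      have hrest : ∑ j ∈ univ.erase j₀, v j = ∑ j ∈ univ.erase j₀, w j :=
        Finset.sum_congr rfl (fun j hj => hagree j (Finset.ne_of_mem_erase hj))
      have hj0 : v j₀ = w j₀ := by
        rw [hrest] at hsum
        exact add_right_cancel hsum
      funext j
      by_cases hj : j = j₀
      · rw [hj]; exact hj0
      · exact hagree j hj
    calc (univ.filter (fun v : Fin ℓ → ZMod 2 => (∑ j, v j) = b ∧ ∀ j ∈ Q, v j = r j)).card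
        ≤ (univ : Finset ({j // j ∈ T} → ZMod 2)).card :=
          Finset.card_le_card_of_injOn (fun v (j : {j // j ∈ T}) => v j.1)
            (fun v _ => mem_univ _) hinj
      _ = 2 ^ (ℓ - 1 - Q.card) := by
          simp [Finset.card_univ, hTcard]
      _ ≤ 2 ^ (ℓ - 1 - min Q.card (ℓ - 1)) := by
          rw [min_eq_left hQcard]

/-- Auxiliary: exponent comparison. -/
lemma exp_bound_aux {ℓ k : ℕ} (hℓ : 2 ≤ ℓ) (hk : k ≤ ℓ) :
    ((2 : ℝ) ^ (ℓ - 1 - min k (ℓ - 1)) : ℝ)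
      ≤ (2 : ℝ) ^ ((ℓ : ℝ) - 1) * (2 : ℝ) ^ (-(k : ℝ) * (1 - 1 / (ℓ : ℝ))) := by
  have hℓR : (2 : ℝ) ≤ (ℓ : ℝ) := by exact_mod_cast hℓ
  have h2 : (1 : ℝ) < 2 := one_lt_two
  rw [← Real.rpow_natCast (2:ℝ) (ℓ - 1 - min k (ℓ - 1)), ← Real.rpow_add (by norm_num)]
  apply Real.rpow_le_rpow_left_iff h2 |>.2
  have hcast : ((ℓ - 1 - min k (ℓ - 1) : ℕ) : ℝ) = (ℓ : ℝ) - 1 - (min k (ℓ - 1) : ℕ) := by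
    have h1 : min k (ℓ - 1) ≤ ℓ - 1 := min_le_right _ _
    push_cast [Nat.cast_sub h1, Nat.cast_sub (by omega : 1 ≤ ℓ)]
    ring
  rw [hcast]
  have key : (k : ℝ) * (1 - 1 / (ℓ : ℝ)) ≤ ((min k (ℓ - 1) : ℕ) : ℝ) := by
    rcases Nat.lt_or_ge k ℓ with h | h
    · have : min k (ℓ - 1) = k := min_eq_left (by omega)
      rw [this]
      have hk0 : (0:ℝ) ≤ (k:ℝ) := Nat.cast_nonneg k
      have : 1 - 1 / (ℓ:ℝ) ≤ 1 := by
        have : 0 < (ℓ:ℝ) := by linarith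
        have : 0 ≤ 1 / (ℓ:ℝ) := by positivity
        linarith
      nlinarith
    · have hkℓ : k = ℓ := le_antisymm hk h
      subst hkℓ
      have : min k (k - 1) = k - 1 := min_eq_right (by omega)
      rw [this]
      have h0 : (0:ℝ) < (k:ℝ) := by linarith
      rw [Nat.cast_sub (by omega : 1 ≤ k)]
      field_simp
      norm_num
  linarith

/-- Auxiliary: the fiber of `blockPar` over `x` intersected with the event factors blockwise. -/
lemma fiber_card_aux {n ℓ : ℕ} (R : Finset (Fin n × Fin ℓ)) (r : Fin n × Fin ℓ → ZMod 2)
    (x : Fin n → ZMod 2) :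
    (univ.filter (fun y : Fin n × Fin ℓ → ZMod 2 =>
        (∀ p ∈ R, y p = r p) ∧ blockPar y = x)).card
      = ∏ i, (univ.filter (fun v : Fin ℓ → ZMod 2 =>
          (∑ j, v j) = x i ∧ ∀ j ∈ univ.filter (fun j => (i, j) ∈ R), v j = r (i, j))).card := by
  rw [← Fintype.card_piFinset]
  apply Finset.card_nbij' (fun y => fun i j => y (i, j)) (fun f => fun p => f p.1 p.2)
  · intro y hy
    simp only [mem_coe, mem_filter, mem_univ, true_and] at hy
    simp only [mem_coe, Fintype.mem_piFinset, mem_filter, mem_univ, true_and]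
    intro i
    exact ⟨congrFun hy.2 i, fun j hj => hy.1 (i, j) hj⟩
  · intro f hf
    simp only [mem_coe, Fintype.mem_piFinset, mem_filter, mem_univ, true_and] at hf
    simp only [mem_coe, mem_filter, mem_univ, true_and]
    exact ⟨fun p hp => (hf p.1).2 p.2 hp, funext fun i => (hf i).1⟩
  · intro y _; rfl
  · intro f _; rfl

lemma prod_rpow_sum_aux {ι : Type*} (s : Finset ι) (a : ι → ℝ) :
    ∏ i ∈ s, (2 : ℝ) ^ (a i) = (2 : ℝ) ^ (∑ i ∈ s, a i) := by
  induction s using Finset.cons_induction with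
  | empty => simp
  | cons i s hi ih => rw [prod_cons, sum_cons, ih, ← Real.rpow_add (by norm_num)]

lemma sum_Q_card_aux {n ℓ : ℕ} (R : Finset (Fin n × Fin ℓ)) :
    ∑ i, (univ.filter (fun j => (i, j) ∈ R)).card = R.card := by
  rw [Finset.card_eq_sum_card_fiberwise (f := Prod.fst) (t := univ) (fun p _ => mem_univ _)]
  apply Finset.sum_congr rfl
  intro i _
  apply Finset.card_nbij' (fun j => (i, j)) (fun p => p.2)
  · intro j hj
    simp only [mem_coe, mem_filter, mem_univ, true_and] at hj ⊢
    simp [hj]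
  · intro p hp
    simp only [mem_coe, mem_filter, mem_univ, true_and] at hp ⊢
    rw [← hp.2]; exact hp.1
  · intro j _; rfl
  · intro p hp
    simp only [mem_coe, mem_filter] at hp
    ext <;> simp [hp.2]

theorem stmt4 {n ℓ : ℕ} (hℓ : 2 ≤ ℓ) (μ : (Fin n → ZMod 2) → ℝ) (hμ : IsDist μ)
    (R : Finset (Fin n × Fin ℓ)) (r : Fin n × Fin ℓ → ZMod 2) :
    pr (parSub μ) (fun y => ∀ p ∈ R, y p = r p)
      ≤ (2 : ℝ) ^ (-(R.card : ℝ) * (1 - 1 / (ℓ : ℝ))) := by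
  set A := univ.filter (fun y : Fin n × Fin ℓ → ZMod 2 => ∀ p ∈ R, y p = r p) with hA
  set D : ℝ := 2 ^ ((ℓ - 1) * n) with hD
  set B : ℝ := (2 : ℝ) ^ (-(R.card : ℝ) * (1 - 1 / (ℓ : ℝ))) with hB
  have hDpos : 0 < D := by positivity
  have hpr : pr (parSub μ) (fun y => ∀ p ∈ R, y p = r p)
      = (∑ y ∈ A, μ (blockPar y)) / D := by
    simp only [pr, parSub, hA, hD]
    rw [← Finset.sum_div]
    exact congrArg (· / (2:ℝ) ^ ((ℓ-1)*n))
      (Finset.sum_congr (Finset.filter_congr_decidable _ _ _) (fun _ _ => rfl))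
  rw [hpr]
  have hfib : ∑ y ∈ A, μ (blockPar y)
      = ∑ x : Fin n → ZMod 2,
          ((univ.filter (fun y : Fin n × Fin ℓ → ZMod 2 =>
            (∀ p ∈ R, y p = r p) ∧ blockPar y = x)).card : ℝ) * μ x := by
    rw [← Finset.sum_fiberwise A blockPar (fun y => μ (blockPar y))]
    apply Finset.sum_congr rfl
    intro x _
    rw [hA, Finset.filter_filter]
    rw [Finset.sum_congr rfl (fun y hy => by
      simp only [mem_filter] at hy
      rw [hy.2.2])]
    rw [Finset.sum_const, nsmul_eq_mul]
  rw [hfib]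
  have hcard : ∀ x : Fin n → ZMod 2,
      ((univ.filter (fun y : Fin n × Fin ℓ → ZMod 2 =>
        (∀ p ∈ R, y p = r p) ∧ blockPar y = x)).card : ℝ) ≤ D * B := by
    intro x
    rw [fiber_card_aux R r x]
    push_cast
    have step : ∀ i : Fin n,
        (((univ.filter (fun v : Fin ℓ → ZMod 2 =>
          (∑ j, v j) = x i ∧ ∀ j ∈ univ.filter (fun j => (i, j) ∈ R), v j = r (i, j))).card : ℝ))
        ≤ (2 : ℝ) ^ ((ℓ : ℝ) - 1)
            * (2 : ℝ) ^ (-(((univ.filter (fun j => (i, j) ∈ R)).card : ℕ) : ℝ) * (1 - 1 / (ℓ : ℝ))) := by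
      intro i
      have h1 := block_card_aux (univ.filter (fun j => (i, j) ∈ R)) (fun j => r (i, j)) (x i)
      have h2 : (univ.filter (fun j => (i, j) ∈ R)).card ≤ ℓ := by
        simpa using Finset.card_filter_le (univ : Finset (Fin ℓ)) _
      calc (((univ.filter (fun v : Fin ℓ → ZMod 2 =>
            (∑ j, v j) = x i ∧ ∀ j ∈ univ.filter (fun j => (i, j) ∈ R), v j = r (i, j))).card : ℝ))
          ≤ ((2 : ℕ) ^ (ℓ - 1 - min (univ.filter (fun j => (i, j) ∈ R)).card (ℓ - 1)) : ℝ) := by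
            exact_mod_cast h1
        _ ≤ _ := by push_cast; exact exp_bound_aux hℓ h2
    calc ∏ i, (((univ.filter (fun v : Fin ℓ → ZMod 2 =>
          (∑ j, v j) = x i ∧ ∀ j ∈ univ.filter (fun j => (i, j) ∈ R), v j = r (i, j))).card : ℝ))
        ≤ ∏ i, ((2 : ℝ) ^ ((ℓ : ℝ) - 1)
            * (2 : ℝ) ^ (-(((univ.filter (fun j => (i, j) ∈ R)).card : ℕ) : ℝ) * (1 - 1 / (ℓ : ℝ)))) :=
          Finset.prod_le_prod (fun i _ => by positivity) (fun i _ => step i)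
      _ = D * B := by
          rw [Finset.prod_mul_distrib, Finset.prod_const, prod_rpow_sum_aux]
          congr 1
          · rw [hD]
            have : ((ℓ : ℝ) - 1) = ((ℓ - 1 : ℕ) : ℝ) := by
              rw [Nat.cast_sub (by omega : 1 ≤ ℓ)]; simp
            rw [this, Real.rpow_natCast, ← pow_mul, Finset.card_univ, Fintype.card_fin]
          · rw [hB]
            congr 1
            rw [← Finset.sum_mul]
            congr 1
            rw [Finset.sum_neg_distrib, ← Nat.cast_sum, sum_Q_card_aux]
  have hbound : ∑ x : Fin n → ZMod 2,
      ((univ.filter (fun y : Fin n × Fin ℓ → ZMod 2 =>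
        (∀ p ∈ R, y p = r p) ∧ blockPar y = x)).card : ℝ) * μ x ≤ D * B := by
    calc ∑ x : Fin n → ZMod 2, ((univ.filter (fun y : Fin n × Fin ℓ → ZMod 2 =>
          (∀ p ∈ R, y p = r p) ∧ blockPar y = x)).card : ℝ) * μ x
        ≤ ∑ x : Fin n → ZMod 2, (D * B) * μ x :=
          Finset.sum_le_sum (fun x _ => mul_le_mul_of_nonneg_right (hcard x) (hμ.1 x))
      _ = D * B := by rw [← Finset.mul_sum, hμ.2, mul_one]
  rw [div_le_iff₀ hDpos]
  calc ∑ x : Fin n → ZMod 2, ((univ.filter (fun y : Fin n × Fin ℓ → ZMod 2 =>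
        (∀ p ∈ R, y p = r p) ∧ blockPar y = x)).card : ℝ) * μ x
      ≤ D * B := hbound
    _ = B * D := mul_comm _ _
end

section
/- Let g : 𝔽₂ⁿ → {−1,1}, 𝒟 a distribution on 𝔽₂ⁿ, ℓ ≥ 1, and S ⊆ [ℓn]. Call S block-complete if there exists S⋆ ⊆ [n] such that S is exactly the union of the full blocks indexed by S⋆. Define g_{⊕ℓ}(y) = g(BlockwisePar(y)) and 𝒟_{⊕ℓ} as the parity-substituted distribution. Then: if S is block-complete with underlying S⋆, Pr_{y∼𝒟_{⊕ℓ}}[g_{⊕ℓ}(y) = χ_S(y)] = Pr_{x∼𝒟}[g(x) = χ_{S⋆}(x)]; and if S is not block-complete, this probability equals 1/2. -/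
open Finset
open scoped Classical

section Aux

lemma neg_one_pow_val_add' (u v : ZMod 2) :
    (-1:ℝ)^((u+v).val) = (-1)^u.val * (-1)^v.val := by
  have hu : u = 0 ∨ u = 1 := by revert u; decide
  have hv : v = 0 ∨ v = 1 := by revert v; decide
  rcases hu with rfl | rfl <;> rcases hv with rfl | rfl <;>
    norm_num [show ((2:ZMod 2)).val = 0 from rfl, show ((1:ZMod 2)).val = 1 from rfl,
      show (1:ZMod 2) + 1 = 0 from rfl]

lemma chi_sum' {α : Type*} (s : Finset α) (f : α → ZMod 2) :
    (-1:ℝ)^((∑ a ∈ s, f a).val) = ∏ a ∈ s, (-1:ℝ)^((f a).val) := by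
  classical
  induction s using Finset.induction_on with
  | empty => simp
  | insert _ _ h ih => rw [Finset.sum_insert h, Finset.prod_insert h, neg_one_pow_val_add', ih]

lemma chi_pm' {ι : Type*} (S : Finset ι) (x : ι → ZMod 2) : chi S x = 1 ∨ chi S x = -1 := by
  rw [← mul_self_eq_one_iff]
  rw [chi, ← Finset.prod_mul_distrib]
  apply Finset.prod_eq_one
  intro i _
  rcases (x i).val.even_or_odd with h | h
  · rw [h.neg_one_pow]; norm_num
  · rw [h.neg_one_pow]; norm_num

def Efun' {n ℓ : ℕ} (j0 : Fin ℓ) (z : Fin n × Fin ℓ → ZMod 2) : Fin n × Fin ℓ → ZMod 2 :=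
  fun p => if p.2 = j0 then (∑ j', z (p.1, j')) else z p

lemma Efun'_at {n ℓ : ℕ} (j0 : Fin ℓ) (z : Fin n × Fin ℓ → ZMod 2) (i : Fin n) :
    Efun' j0 z (i, j0) = ∑ j', z (i, j') := by simp [Efun']

lemma Efun'_ne {n ℓ : ℕ} (j0 : Fin ℓ) (z : Fin n × Fin ℓ → ZMod 2) (i : Fin n) {j : Fin ℓ}
    (h : j ≠ j0) : Efun' j0 z (i, j) = z (i, j) := by simp [Efun', h]

lemma sumEfun' {n ℓ : ℕ} (j0 : Fin ℓ) (z : Fin n × Fin ℓ → ZMod 2) (i : Fin n) :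
    (∑ j, Efun' j0 z (i, j)) = z (i, j0) := by
  classical
  rw [← Finset.add_sum_erase _ _ (Finset.mem_univ j0), Efun'_at]
  have h2 : ∑ j ∈ Finset.univ.erase j0, Efun' j0 z (i, j)
      = ∑ j ∈ Finset.univ.erase j0, z (i, j) :=
    Finset.sum_congr rfl fun j hj => Efun'_ne j0 z i (Finset.mem_erase.mp hj).1
  rw [h2, ← Finset.add_sum_erase _ (fun j => z (i, j)) (Finset.mem_univ j0)]
  generalize z (i, j0) = a
  generalize (∑ j ∈ Finset.univ.erase j0, z (i, j)) = b
  revert a b; decide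

lemma Efun'_invol {n ℓ : ℕ} (j0 : Fin ℓ) (z : Fin n × Fin ℓ → ZMod 2) :
    Efun' j0 (Efun' j0 z) = z := by
  funext p
  obtain ⟨i, j⟩ := p
  by_cases h : j = j0
  · rw [h, Efun'_at, sumEfun']
  · rw [Efun'_ne j0 _ i h, Efun'_ne j0 z i h]

lemma sum_fiber' {n ℓ : ℕ} (hℓ : 1 ≤ ℓ) (f : (Fin n → ZMod 2) → ℝ) :
    ∑ y : Fin n × Fin ℓ → ZMod 2, f (blockPar y) = 2 ^ ((ℓ - 1) * n) * ∑ x, f x := by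
  classical
  unfold blockPar
  set j0 : Fin ℓ := ⟨0, hℓ⟩ with hj0
  have step1 : ∑ y : Fin n × Fin ℓ → ZMod 2, f (fun i => ∑ j, y (i, j))
      = ∑ z : Fin n × Fin ℓ → ZMod 2, f (fun i => z (i, j0)) := by
    rw [← Equiv.sum_comp (⟨Efun' j0, Efun' j0, Efun'_invol j0, Efun'_invol j0⟩ :
      (Fin n × Fin ℓ → ZMod 2) ≃ (Fin n × Fin ℓ → ZMod 2))
      (fun y => f (fun i => ∑ j, y (i, j)))]
    refine Finset.sum_congr rfl fun z _ => ?_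
    simp only [Equiv.coe_fn_mk]
    congr 1
    funext i
    exact sumEfun' j0 z i
  rw [step1]
  set e2 : (Fin n × Fin ℓ → ZMod 2) ≃ ((Fin n → ZMod 2) × (Fin n × {j : Fin ℓ // j ≠ j0} → ZMod 2)) :=
    { toFun := fun z => (fun i => z (i, j0), fun q => z (q.1, q.2.1))
      invFun := fun xw p => if h : p.2 = j0 then xw.1 p.1 else xw.2 (p.1, ⟨p.2, h⟩)
      left_inv := by
        intro z; funext p; obtain ⟨i, j⟩ := p
        by_cases h : j = j0 <;> simp [h]
      right_inv := by
        intro xw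
        refine Prod.ext ?_ ?_
        · funext i; simp
        · funext q; simp [q.2.2] } with he2
  rw [← Equiv.sum_comp e2.symm (fun z => f (fun i => z (i, j0)))]
  have key : ∀ xw : (Fin n → ZMod 2) × (Fin n × {j : Fin ℓ // j ≠ j0} → ZMod 2),
      (fun i => (e2.symm xw) (i, j0)) = xw.1 := by
    intro xw; funext i; simp [he2, Equiv.symm]
  simp only [key]
  rw [Fintype.sum_prod_type]
  simp only [Finset.sum_const, Finset.card_univ, nsmul_eq_mul]
  have hcard : ((Fintype.card (Fin n × {j : Fin ℓ // j ≠ j0} → ZMod 2)) : ℝ)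
      = 2 ^ ((ℓ - 1) * n) := by
    rw [Fintype.card_fun, Fintype.card_prod, ZMod.card]
    have h1 : Fintype.card {j : Fin ℓ // j ≠ j0} = ℓ - 1 := by
      rw [Fintype.card_subtype_compl, Fintype.card_subtype_eq, Fintype.card_fin]
    rw [h1, Fintype.card_fin]
    push_cast
    rw [Nat.mul_comm n (ℓ - 1)]
  simp only [hcard]
  rw [← Finset.mul_sum]

def flip2' {n ℓ : ℕ} (i0 : Fin n) (j1 j2 : Fin ℓ) (y : Fin n × Fin ℓ → ZMod 2) :
    Fin n × Fin ℓ → ZMod 2 :=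
  fun p => if p = (i0, j1) ∨ p = (i0, j2) then y p + 1 else y p

lemma flip2'_invol {n ℓ : ℕ} (i0 : Fin n) (j1 j2 : Fin ℓ) (y : Fin n × Fin ℓ → ZMod 2) :
    flip2' i0 j1 j2 (flip2' i0 j1 j2 y) = y := by
  funext p
  have h2 : ∀ a : ZMod 2, a + 1 + 1 = a := by decide
  by_cases h : p = (i0, j1) ∨ p = (i0, j2) <;> simp [flip2', h, h2]

lemma blockPar_flip2' {n ℓ : ℕ} {i0 : Fin n} {j1 j2 : Fin ℓ} (hne : j1 ≠ j2)
    (y : Fin n × Fin ℓ → ZMod 2) :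
    blockPar (flip2' i0 j1 j2 y) = blockPar y := by
  classical
  funext i
  simp only [blockPar]
  by_cases hi : i = i0
  · subst hi
    have hterm : ∀ j, flip2' i j1 j2 y (i, j)
        = y (i, j) + ((if j = j1 then (1:ZMod 2) else 0) + (if j = j2 then 1 else 0)) := by
      intro j
      by_cases h1 : j = j1
      · subst h1; simp [flip2', hne]
      · by_cases h2 : j = j2
        · subst h2; simp [flip2', h1, Prod.ext_iff, Ne.symm hne]
        · simp [flip2', h1, h2, Prod.ext_iff]
    rw [Finset.sum_congr rfl (fun j _ => hterm j), Finset.sum_add_distrib,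
      Finset.sum_add_distrib, Finset.sum_ite_eq' Finset.univ j1 (fun _ => (1:ZMod 2)),
      Finset.sum_ite_eq' Finset.univ j2 (fun _ => (1:ZMod 2))]
    simp [show (1:ZMod 2) + 1 = 0 from rfl]
  · refine Finset.sum_congr rfl fun j _ => ?_
    simp [flip2', Prod.ext_iff, hi]

lemma chi_flip2' {n ℓ : ℕ} {i0 : Fin n} {j1 j2 : Fin ℓ} {S : Finset (Fin n × Fin ℓ)}
    (hj1 : (i0, j1) ∈ S) (hj2 : (i0, j2) ∉ S) (y : Fin n × Fin ℓ → ZMod 2) :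
    chi S (flip2' i0 j1 j2 y) = - chi S y := by
  classical
  have hter : ∀ p ∈ S, (-1:ℝ)^((flip2' i0 j1 j2 y p).val)
      = (-1)^((y p).val) * (if p = (i0,j1) then -1 else 1) := by
    intro p hp
    by_cases h : p = (i0, j1)
    · subst h; rw [if_pos rfl]
      have he : flip2' i0 j1 j2 y (i0,j1) = y (i0,j1) + 1 := by simp [flip2']
      rw [he, neg_one_pow_val_add']
      norm_num [show ((1:ZMod 2)).val = 1 from rfl]
    · rw [if_neg h]
      have hp2 : p ≠ (i0, j2) := fun hq => hj2 (hq ▸ hp)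
      have he : flip2' i0 j1 j2 y p = y p := by simp [flip2', h, hp2]
      rw [he, mul_one]
  rw [chi, chi, Finset.prod_congr rfl hter, Finset.prod_mul_distrib,
    Finset.prod_ite_eq' S (i0,j1) (fun _ => (-1:ℝ)), if_pos hj1]
  ring

lemma pr_eq_sum_ite {α : Type*} [Fintype α] (w : α → ℝ) (P : α → Prop) :
    pr w P = ∑ a, if P a then w a else 0 := by
  rw [pr, Finset.sum_filter]

end Aux

theorem stmt6 {n ℓ : ℕ} (hℓ : 1 ≤ ℓ) (μ : (Fin n → ZMod 2) → ℝ) (hμ : IsDist μ)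
    (g : (Fin n → ZMod 2) → ℝ) (hg : ∀ x, g x = 1 ∨ g x = -1)
    (S : Finset (Fin n × Fin ℓ)) :
    (∀ Sstar : Finset (Fin n), S = Sstar ×ˢ Finset.univ →
      pr (parSub μ) (fun y => g (blockPar y) = chi S y)
        = pr μ (fun x => g x = chi Sstar x)) ∧
    ((¬ ∃ Sstar : Finset (Fin n), S = Sstar ×ˢ Finset.univ) →
      pr (parSub μ) (fun y => g (blockPar y) = chi S y) = 1 / 2) := by
  classical
  have N0 : (2:ℝ) ^ ((ℓ - 1) * n) ≠ 0 := by positivity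
  constructor
  · intro Sstar hS
    subst hS
    have hchi : ∀ y : Fin n × Fin ℓ → ZMod 2,
        chi (Sstar ×ˢ Finset.univ) y = chi Sstar (blockPar y) := by
      intro y
      rw [chi, Finset.prod_product, chi]
      refine Finset.prod_congr rfl fun i _ => ?_
      simp only [blockPar]
      exact (chi_sum' Finset.univ (fun j => y (i, j))).symm
    rw [pr_eq_sum_ite, pr_eq_sum_ite]
    have hterm : ∀ y : Fin n × Fin ℓ → ZMod 2,
        (if g (blockPar y) = chi (Sstar ×ˢ Finset.univ) y then parSub μ y else 0)
          = (fun x => if g x = chi Sstar x then μ x else 0) (blockPar y)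
              / 2 ^ ((ℓ - 1) * n) := by
      intro y
      rw [hchi y, parSub]
      by_cases h : g (blockPar y) = chi Sstar (blockPar y) <;> simp [h]
    rw [Finset.sum_congr rfl (fun y _ => hterm y), ← Finset.sum_div,
      sum_fiber' hℓ (fun x => if g x = chi Sstar x then μ x else 0), mul_comm, mul_div_assoc, div_self N0, mul_one]
  · intro hnot
    have hex : ∃ (i0 : Fin n) (j1 j2 : Fin ℓ), (i0, j1) ∈ S ∧ (i0, j2) ∉ S := by
      by_contra hc
      push_neg at hc
      refine hnot ⟨Finset.univ.filter (fun i => (i, ⟨0, hℓ⟩) ∈ S), ?_⟩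
      ext ⟨i, j⟩
      simp only [Finset.mem_product, Finset.mem_filter, Finset.mem_univ, true_and, and_true]
      exact ⟨fun h => hc i j ⟨0, hℓ⟩ h, fun h => hc i ⟨0, hℓ⟩ j h⟩
    obtain ⟨i0, j1, j2, hj1, hj2⟩ := hex
    have hne : j1 ≠ j2 := fun h => hj2 (h ▸ hj1)
    have hflip : ∀ y, (g (blockPar (flip2' i0 j1 j2 y)) = chi S (flip2' i0 j1 j2 y))
        ↔ ¬ (g (blockPar y) = chi S y) := by
      intro y
      rw [blockPar_flip2' hne y, chi_flip2' hj1 hj2 y]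
      rcases hg (blockPar y) with h | h <;> rcases chi_pm' S y with h2 | h2 <;>
        rw [h, h2] <;> norm_num
    have hw : ∀ y, parSub μ (flip2' i0 j1 j2 y) = parSub μ y := by
      intro y
      rw [parSub, parSub, blockPar_flip2' hne y]
    have hsum : ∑ y ∈ Finset.univ.filter (fun y => g (blockPar y) = chi S y), parSub μ y
        = ∑ y ∈ Finset.univ.filter (fun y => ¬ (g (blockPar y) = chi S y)), parSub μ y := by
      refine Finset.sum_nbij' (i := fun y => flip2' i0 j1 j2 y)
        (j := fun y => flip2' i0 j1 j2 y) ?_ ?_ ?_ ?_ ?_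
      · intro a ha
        simp only [Finset.mem_filter, Finset.mem_univ, true_and] at ha ⊢
        exact fun hq => (hflip a).mp hq ha
      · intro a ha
        simp only [Finset.mem_filter, Finset.mem_univ, true_and] at ha ⊢
        exact (hflip a).mpr ha
      · intro a _; exact flip2'_invol i0 j1 j2 a
      · intro a _; exact flip2'_invol i0 j1 j2 a
      · intro a _; exact (hw a).symm
    have htotal : ∑ y : Fin n × Fin ℓ → ZMod 2, parSub μ y = 1 := by
      simp only [parSub]
      rw [← Finset.sum_div, sum_fiber' hℓ μ, hμ.2, mul_one, div_self N0]
    have hsplit : ∑ y ∈ Finset.univ.filter (fun y => g (blockPar y) = chi S y), parSub μ y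
        + ∑ y ∈ Finset.univ.filter (fun y => ¬ (g (blockPar y) = chi S y)), parSub μ y = 1 := by
      rw [Finset.sum_filter_add_sum_filter_not]
      exact htotal
    rw [pr]
    rw [← hsum] at hsplit
    linarith
end

section
/- Let g : 𝔽₂ⁿ → {−1,1} and 𝒟 a distribution on 𝔽₂ⁿ. If for every S ⊆ [n] with |S| ≤ k', Pr_{x∼𝒟}[g(x) ≠ χ_S(x)] = 1/2, then for every ℓ ≥ 1 and every function h : (𝔽₂^ℓ)ⁿ → ℝ of Fourier degree at most ℓk', E_{y∼𝒟_{⊕ℓ}}[g_{⊕ℓ}(y)·h(y)] = 0; equivalently, g_{⊕ℓ} is at distance exactly 1/2 from every ±1-valued function of Fourier degree ≤ ℓk' under 𝒟_{⊕ℓ}. -/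
open Finset
open scoped Classical

-- ===== auxiliary lemmas for stmt8 =====

lemma sgn_add (a b : ZMod 2) : (-1:ℝ)^((a+b).val) = (-1)^a.val * (-1)^b.val := by
  have h1 : ((1:ZMod 2)).val = 1 := rfl
  have h2 : ((2:ZMod 2)).val = 0 := rfl
  rcases (by decide : ∀ x : ZMod 2, x = 0 ∨ x = 1) a with rfl | rfl <;>
    rcases (by decide : ∀ x : ZMod 2, x = 0 ∨ x = 1) b with rfl | rfl <;> norm_num [h1, h2]

lemma sgn_flip (a : ZMod 2) : (-1:ℝ)^((a+1).val) = -(-1)^a.val := by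
  have h1 : ((1:ZMod 2)).val = 1 := rfl
  have h2 : ((2:ZMod 2)).val = 0 := rfl
  rcases (by decide : ∀ x : ZMod 2, x = 0 ∨ x = 1) a with rfl | rfl <;> norm_num [h1, h2]

lemma chi_sum_pow {ι : Type*} (s : Finset ι) (z : ι → ZMod 2) :
    ∏ j ∈ s, (-1:ℝ)^(z j).val = (-1)^((∑ j ∈ s, z j).val) := by
  induction s using Finset.cons_induction with
  | empty => simp
  | cons a s ha ih => rw [Finset.prod_cons, Finset.sum_cons, sgn_add, ih]

lemma lemA {n : ℕ} (k' : ℕ) (μ : (Fin n → ZMod 2) → ℝ) (hμ : IsDist μ)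
    (g : (Fin n → ZMod 2) → ℝ) (hg : ∀ x, g x = 1 ∨ g x = -1)
    (hpar : ∀ S : Finset (Fin n), S.card ≤ k' → pr μ (fun x => g x ≠ chi S x) = 1 / 2)
    (T : Finset (Fin n)) (hT : T.card ≤ k') :
    ∑ x, μ x * (g x * chi T x) = 0 := by
  have hchi : ∀ x, chi T x = 1 ∨ chi T x = -1 := by
    intro x
    have : chi T x = (-1:ℝ) ^ (∑ i ∈ T, (x i).val) := by
      rw [chi, Finset.prod_pow_eq_pow_sum]
    rcases Nat.even_or_odd (∑ i ∈ T, (x i).val) with he | ho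
    · left; rw [this, he.neg_one_pow]
    · right; rw [this, ho.neg_one_pow]
  have key : ∀ x, μ x * (g x * chi T x)
      = μ x - 2 * (if g x ≠ chi T x then μ x else 0) := by
    intro x
    rcases hg x with h1 | h1 <;> rcases hchi x with h2 | h2 <;>
      simp [h1, h2] <;> norm_num <;> ring
  rw [Finset.sum_congr rfl (fun x _ => key x), Finset.sum_sub_distrib, hμ.2,
    ← Finset.mul_sum, Finset.sum_ite, Finset.sum_const_zero, add_zero]
  rw [show (∑ x ∈ univ.filter (fun x => g x ≠ chi T x), μ x)
      = pr μ (fun x => g x ≠ chi T x)  from by unfold pr; congr!,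
    hpar T hT]
  norm_num

lemma fiber_card {ℓ : ℕ} (hℓ : 1 ≤ ℓ) (b : ZMod 2) :
    (univ.filter (fun z : Fin ℓ → ZMod 2 => ∑ j, z j = b)).card = 2 ^ (ℓ - 1) := by
  obtain ⟨j0⟩ : Nonempty (Fin ℓ) := ⟨⟨0, hℓ⟩⟩
  have h11 : ∀ a : ZMod 2, a + 1 + 1 = a := by decide
  have hsum : ∀ z : Fin ℓ → ZMod 2,
      (∑ j, Function.update z j0 (z j0 + 1) j) = (∑ j, z j) + 1 := by
    intro z
    rw [Finset.sum_update_of_mem (mem_univ j0)]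
    rw [Finset.sum_eq_sum_sdiff_singleton_add (mem_univ j0) z]
    ring
  have hinv : ∀ z : Fin ℓ → ZMod 2,
      Function.update (Function.update z j0 (z j0 + 1)) j0
        (Function.update z j0 (z j0 + 1) j0 + 1) = z := by
    intro z
    rw [Function.update_self, Function.update_idem, h11, Function.update_eq_self]
  have hcard : ∀ c : ZMod 2,
      (univ.filter (fun z : Fin ℓ → ZMod 2 => ∑ j, z j = c)).card =
      (univ.filter (fun z : Fin ℓ → ZMod 2 => ∑ j, z j = c + 1)).card := by
    intro c
    apply Finset.card_bij' (fun z _ => Function.update z j0 (z j0 + 1))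
      (fun z _ => Function.update z j0 (z j0 + 1))
    · intro z _; exact hinv z
    · intro z _; exact hinv z
    · intro z hz
      simp only [mem_filter, mem_univ, true_and] at hz ⊢
      rw [hsum, hz]
    · intro z hz
      simp only [mem_filter, mem_univ, true_and] at hz ⊢
      rw [hsum, hz, h11]
  have hsplit := Finset.card_filter_add_card_filter_not
    (s := (univ : Finset (Fin ℓ → ZMod 2))) (p := fun z => ∑ j, z j = b)
  have huniv : (univ : Finset (Fin ℓ → ZMod 2)).card = 2 ^ ℓ := by
    simp [Fintype.card_fun]
  have hne : ∀ a c : ZMod 2, (a = c + 1) ↔ ¬(a = c) := by decide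
  have h2 : (univ.filter (fun z : Fin ℓ → ZMod 2 => ¬ (∑ j, z j = b))).card
      = (univ.filter (fun z : Fin ℓ → ZMod 2 => ∑ j, z j = b + 1)).card := by
    congr 1
    apply Finset.filter_congr
    intro z _
    simp [hne]
  have hc := hcard b
  rw [huniv, h2, ← hc] at hsplit
  clear h2 hc hcard hsum hinv h11 hne huniv
  generalize (univ.filter (fun z : Fin ℓ → ZMod 2 => ∑ j, z j = b)).card = A at hsplit ⊢
  have hp : 2 ^ ℓ = 2 * 2 ^ (ℓ - 1) := by
    rw [← pow_succ']
    congr 1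
    omega
  omega

lemma block_sum {ℓ : ℕ} (hℓ : 1 ≤ ℓ) (T : Finset (Fin ℓ)) (b : ZMod 2) :
    ∑ z ∈ univ.filter (fun z : Fin ℓ → ZMod 2 => ∑ j, z j = b), chi T z =
      if T = ∅ then (2:ℝ)^(ℓ-1)
      else if T = univ then (2:ℝ)^(ℓ-1) * (-1)^b.val
      else 0 := by
  by_cases h0 : T = ∅
  · subst h0
    simp [chi, fiber_card hℓ b]
  by_cases h1 : T = univ
  · subst h1
    rw [if_neg h0, if_pos rfl]
    have : ∀ z ∈ univ.filter (fun z : Fin ℓ → ZMod 2 => ∑ j, z j = b),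
        chi univ z = (-1:ℝ)^b.val := by
      intro z hz
      simp only [mem_filter, mem_univ, true_and] at hz
      rw [chi, chi_sum_pow, hz]
    rw [Finset.sum_congr rfl this, Finset.sum_const, fiber_card hℓ b, nsmul_eq_mul]
    push_cast
    ring
  · rw [if_neg h0, if_neg h1]
    obtain ⟨j0, hj0⟩ := Finset.nonempty_iff_ne_empty.2 h0
    obtain ⟨j1, hj1⟩ : ∃ j, j ∉ T := by
      by_contra hcon
      push_neg at hcon
      exact h1 (Finset.eq_univ_iff_forall.2 hcon)
    have hne : j0 ≠ j1 := fun hh => hj1 (hh ▸ hj0)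
    set flip : (Fin ℓ → ZMod 2) → (Fin ℓ → ZMod 2) :=
      fun z j => z j + if j = j0 ∨ j = j1 then 1 else 0 with hflip
    have h11 : ∀ a : ZMod 2, a + 1 + 1 = a := by decide
    have hinv : ∀ z, flip (flip z) = z := by
      intro z
      funext j
      by_cases hj : j = j0 ∨ j = j1 <;> simp [hflip, hj, h11]
    have hmem : ∀ z : Fin ℓ → ZMod 2, (∑ j, flip z j) = ∑ j, z j := by
      intro z
      rw [hflip]
      simp only
      rw [Finset.sum_add_distrib]
      have : (∑ j, if j = j0 ∨ j = j1 then (1:ZMod 2) else 0) = 0 := by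
        have hsplit : ∀ j : Fin ℓ, (if j = j0 ∨ j = j1 then (1:ZMod 2) else 0)
            = (if j = j0 then 1 else 0) + (if j = j1 then 1 else 0) := by
          intro j
          by_cases a : j = j0 <;> by_cases cc : j = j1 <;> simp_all [hne]
        rw [Finset.sum_congr rfl (fun j _ => hsplit j), Finset.sum_add_distrib]
        simp
        decide
      rw [this, add_zero]
    have hchi : ∀ z, chi T (flip z) = -chi T z := by
      intro z
      rw [chi, chi, ← Finset.mul_prod_erase T _ hj0, ← Finset.mul_prod_erase T _ hj0]
      have hrest : ∀ j ∈ T.erase j0, (-1:ℝ)^((flip z j).val) = (-1)^((z j).val) := by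
        intro j hj
        have hjj0 : j ≠ j0 := Finset.ne_of_mem_erase hj
        have hjj1 : j ≠ j1 := fun hh => hj1 (hh ▸ Finset.mem_of_mem_erase hj)
        simp [hflip, hjj0, hjj1]
      rw [Finset.prod_congr rfl hrest]
      have : flip z j0 = z j0 + 1 := by simp [hflip]
      rw [this, sgn_flip]
      ring
    apply Finset.sum_involution (fun z _ => flip z)
    · intro z hz
      rw [hchi]; ring
    · intro z hz hnz
      intro hcon
      have : flip z j0 = z j0 := by rw [hcon]
      simp [hflip] at this
    · intro z hz
      simp only [mem_filter, mem_univ, true_and] at hz ⊢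
      rw [hmem, hz]
    · intro z hz
      exact hinv z

lemma chi_factor {n ℓ : ℕ} (S : Finset (Fin n × Fin ℓ)) (y : Fin n × Fin ℓ → ZMod 2) :
    chi S y = ∏ i, chi (univ.filter fun j => (i,j) ∈ S) (fun j => y (i,j)) := by
  symm
  calc ∏ i, chi (univ.filter fun j => (i,j) ∈ S) (fun j => y (i,j))
      = ∏ i, ∏ j, (if (i,j) ∈ S then (-1:ℝ)^(y (i,j)).val else 1) := by
        refine Finset.prod_congr rfl fun i _ => ?_
        rw [chi, Finset.prod_filter]
    _ = ∏ p : Fin n × Fin ℓ, (if p ∈ S then (-1:ℝ)^(y p).val else 1) := by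
        rw [← Finset.univ_product_univ, Finset.prod_product]
    _ = ∏ p ∈ univ.filter (fun p => p ∈ S), (-1:ℝ)^(y p).val := by
        rw [Finset.prod_filter]
    _ = chi S y := by rw [chi]; congr 1; simp

lemma fiber_chi_sum {n ℓ : ℕ} (S : Finset (Fin n × Fin ℓ)) (x : Fin n → ZMod 2) :
    ∑ y ∈ univ.filter (fun y : Fin n × Fin ℓ → ZMod 2 => blockPar y = x), chi S y =
    ∏ i, ∑ z ∈ univ.filter (fun z : Fin ℓ → ZMod 2 => ∑ j, z j = x i),
        chi (univ.filter fun j => (i,j) ∈ S) z := by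
  rw [Finset.prod_univ_sum]
  symm
  apply Finset.sum_nbij' (i := fun Y => Function.uncurry Y) (j := fun y => Function.curry y)
  · intro Y hY
    rw [Fintype.mem_piFinset] at hY
    simp only [mem_filter, mem_univ, true_and]
    funext i
    have := hY i
    simp only [mem_filter, mem_univ, true_and] at this
    exact this
  · intro y hy
    simp only [mem_filter, mem_univ, true_and] at hy
    rw [Fintype.mem_piFinset]
    intro i
    simp only [mem_filter, mem_univ, true_and]
    have := congrFun hy i
    exact this
  · intro Y _; rfl
  · intro y _; rfl
  · intro Y _
    rw [chi_factor]
    rfl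

lemma keyS {n : ℕ} (k' : ℕ) (μ : (Fin n → ZMod 2) → ℝ) (hμ : IsDist μ)
    (g : (Fin n → ZMod 2) → ℝ) (hg : ∀ x, g x = 1 ∨ g x = -1)
    (hpar : ∀ S : Finset (Fin n), S.card ≤ k' → pr μ (fun x => g x ≠ chi S x) = 1 / 2)
    (ℓ : ℕ) (hℓ : 1 ≤ ℓ) (S : Finset (Fin n × Fin ℓ)) (hS : S.card ≤ ℓ * k') :
    ∑ y, parSub μ y * (g (blockPar y) * chi S y) = 0 := by
  rw [← Finset.sum_fiberwise univ blockPar (fun y => parSub μ y * (g (blockPar y) * chi S y))]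
  have step : ∀ x : Fin n → ZMod 2,
      ∑ y ∈ univ.filter (fun y : Fin n × Fin ℓ → ZMod 2 => blockPar y = x),
        parSub μ y * (g (blockPar y) * chi S y)
      = μ x / 2^((ℓ-1)*n) * g x *
        ∏ i, ∑ z ∈ univ.filter (fun z : Fin ℓ → ZMod 2 => ∑ j, z j = x i),
          chi (univ.filter fun j => (i,j) ∈ S) z := by
    intro x
    rw [← fiber_chi_sum, Finset.mul_sum]
    apply Finset.sum_congr rfl
    intro y hy
    simp only [mem_filter, mem_univ, true_and] at hy
    rw [parSub, hy]
    ring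
  rw [Finset.sum_congr rfl (fun x _ => step x)]
  by_cases hcase : ∀ i : Fin n,
      (univ.filter fun j => (i,j) ∈ S) = ∅ ∨ (univ.filter fun j => (i,j) ∈ S) = univ
  · set T := univ.filter (fun i : Fin n => (univ.filter fun j => (i,j) ∈ S) = univ) with hT
    have hemp : (univ : Finset (Fin ℓ)) ≠ ∅ := by
      simp [Finset.univ_eq_empty_iff]
      exact Fin.pos_iff_nonempty.1 hℓ
    have hfac : ∀ x : Fin n → ZMod 2,
        (∏ i, ∑ z ∈ univ.filter (fun z : Fin ℓ → ZMod 2 => ∑ j, z j = x i),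
          chi (univ.filter fun j => (i,j) ∈ S) z) = 2^((ℓ-1)*n) * chi T x := by
      intro x
      have hterm : ∀ i : Fin n,
          (∑ z ∈ univ.filter (fun z : Fin ℓ → ZMod 2 => ∑ j, z j = x i),
            chi (univ.filter fun j => (i,j) ∈ S) z)
          = (2:ℝ)^(ℓ-1) * (if i ∈ T then (-1:ℝ)^((x i).val) else 1) := by
        intro i
        rw [block_sum hℓ _ (x i)]
        rcases hcase i with he | hu
        · have hiT : i ∉ T := by
            rw [hT]
            simp only [mem_filter, mem_univ, true_and]
            rw [he]
            exact fun hcon => hemp hcon.symm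
          rw [if_pos he, if_neg hiT, mul_one]
        · have hiT : i ∈ T := by
            rw [hT]; simp only [mem_filter, mem_univ, true_and]; exact hu
          have hne : (univ.filter fun j => (i,j) ∈ S) ≠ ∅ := by
            rw [hu]; exact hemp
          rw [if_neg hne, if_pos hu, if_pos hiT]
      rw [Finset.prod_congr rfl (fun i _ => hterm i), Finset.prod_mul_distrib,
        Finset.prod_const, Finset.card_univ, Fintype.card_fin, ← pow_mul]
      congr 1
      rw [chi, Finset.prod_ite_mem, Finset.univ_inter]
    rw [Finset.sum_congr rfl (fun x _ => by rw [hfac x])]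
    have hTcard : T.card ≤ k' := by
      have hcardS : S.card = T.card * ℓ := by
        rw [Finset.card_eq_sum_card_fiberwise
          (f := fun p : Fin n × Fin ℓ => p.1) (t := univ) (fun p _ => mem_univ _)]
        have hfib : ∀ i : Fin n, (S.filter fun p => p.1 = i).card
            = (univ.filter fun j => (i,j) ∈ S).card := by
          intro i
          apply Finset.card_nbij' (i := fun p => p.2) (j := fun j => (i, j))
          · intro p hp
            simp only [mem_coe, mem_filter] at hp ⊢
            refine ⟨mem_univ _, ?_⟩
            have : (i, p.2) = p := by
              rw [← hp.2]
            rw [this]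
            exact hp.1
          · intro j hj
            simp only [mem_coe, mem_filter, mem_univ, true_and] at hj
            simp [hj]
          · intro p hp
            simp only [mem_coe, mem_filter] at hp
            rw [← hp.2]
          · intro j _
            rfl
        rw [Finset.sum_congr rfl (fun i _ => hfib i)]
        have hval : ∀ i : Fin n, (univ.filter fun j => (i,j) ∈ S).card
            = if i ∈ T then ℓ else 0 := by
          intro i
          rcases hcase i with he | hu
          · have hiT : i ∉ T := by
              rw [hT]
              simp only [mem_filter, mem_univ, true_and]
              rw [he]
              exact fun hcon => hemp hcon.symm
            rw [if_neg hiT, he, Finset.card_empty]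
          · have hiT : i ∈ T := by
              rw [hT]; simp only [mem_filter, mem_univ, true_and]; exact hu
            rw [if_pos hiT, hu, Finset.card_univ, Fintype.card_fin]
        rw [Finset.sum_congr rfl (fun i _ => hval i), Finset.sum_ite_mem,
          Finset.univ_inter, Finset.sum_const, smul_eq_mul]
      rw [hcardS] at hS
      have hℓ' : 0 < ℓ := hℓ
      calc T.card = T.card * ℓ / ℓ := by rw [Nat.mul_div_cancel _ hℓ']
        _ ≤ ℓ * k' / ℓ := Nat.div_le_div_right hS
        _ = k' := by rw [Nat.mul_div_cancel_left _ hℓ']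
    have hD : ((2:ℝ)^((ℓ-1)*n)) ≠ 0 := by positivity
    have : ∀ x : Fin n → ZMod 2,
        μ x / 2^((ℓ-1)*n) * g x * (2^((ℓ-1)*n) * chi T x) = μ x * (g x * chi T x) := by
      intro x
      field_simp
    rw [Finset.sum_congr rfl (fun x _ => this x)]
    exact lemA k' μ hμ g hg hpar T hTcard
  · push_neg at hcase
    obtain ⟨i0, hi0e, hi0u⟩ := hcase
    apply Finset.sum_eq_zero
    intro x _
    have : (∏ i, ∑ z ∈ univ.filter (fun z : Fin ℓ → ZMod 2 => ∑ j, z j = x i),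
        chi (univ.filter fun j => (i,j) ∈ S) z) = 0 := by
      apply Finset.prod_eq_zero (mem_univ i0)
      rw [block_sum hℓ _ (x i0), if_neg (Finset.nonempty_iff_ne_empty.1 hi0e), if_neg hi0u]
    rw [this, mul_zero]

theorem stmt8 {n : ℕ} (k' : ℕ) (μ : (Fin n → ZMod 2) → ℝ) (hμ : IsDist μ)
    (g : (Fin n → ZMod 2) → ℝ) (hg : ∀ x, g x = 1 ∨ g x = -1)
    (hpar : ∀ S : Finset (Fin n), S.card ≤ k' → pr μ (fun x => g x ≠ chi S x) = 1 / 2)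
    (ℓ : ℕ) (hℓ : 1 ≤ ℓ) (h : (Fin n × Fin ℓ → ZMod 2) → ℝ)
    (hh : HasDegLE h (ℓ * k')) :
    ∑ y, parSub μ y * (g (blockPar y) * h y) = 0 := by
  obtain ⟨c, hc, hrep⟩ := hh
  calc ∑ y, parSub μ y * (g (blockPar y) * h y)
      = ∑ y, ∑ S : Finset (Fin n × Fin ℓ),
          c S * (parSub μ y * (g (blockPar y) * chi S y)) := by
        apply Finset.sum_congr rfl
        intro y _
        rw [hrep y, Finset.mul_sum, Finset.mul_sum]
        apply Finset.sum_congr rfl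
        intro S _
        ring
    _ = ∑ S : Finset (Fin n × Fin ℓ),
          c S * ∑ y, parSub μ y * (g (blockPar y) * chi S y) := by
        rw [Finset.sum_comm]
        exact Finset.sum_congr rfl fun S _ => (Finset.mul_sum _ _ _).symm
    _ = 0 := by
        apply Finset.sum_eq_zero
        intro S _
        by_cases hcS : c S = 0
        · rw [hcS, zero_mul]
        · rw [keyS k' μ hμ g hg hpar ℓ hℓ S (hc S hcS), mul_zero]
end

section
/- Let 𝒟 be a distribution on 𝔽₂ⁿ and g : 𝔽₂ⁿ → 𝔽₂. If g agrees 𝒟-almost surely with a parity χ_S with |S| ≤ k, then g_{⊕ℓ} agrees 𝒟_{⊕ℓ}-almost surely with a parity on at most kℓ coordinates of (𝔽₂^ℓ)ⁿ, namely the parity over the union of the blocks indexed by S. -/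
open Finset
open scoped Classical

theorem stmt11 {n : ℕ} (ℓ : ℕ) (μ : (Fin n → ZMod 2) → ℝ) (hμ : IsDist μ)
    (g : (Fin n → ZMod 2) → ZMod 2) (k : ℕ) (S : Finset (Fin n)) (hS : S.card ≤ k)
    (hag : pr μ (fun x => g x ≠ chi2 S x) = 0) :
    (S ×ˢ (Finset.univ : Finset (Fin ℓ))).card ≤ k * ℓ ∧
    pr (parSub μ) (fun y : Fin n × Fin ℓ → ZMod 2 =>
      g (blockPar y) ≠ chi2 (S ×ˢ Finset.univ) y) = 0 := by
  unfold pr at hag ⊢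
  have hzero : ∀ x, g x ≠ chi2 S x → μ x = 0 := by
    intro x hx
    have h := (Finset.sum_eq_zero_iff_of_nonneg (fun a _ => hμ.1 a)).mp hag
    exact h x (by simp [hx])
  have hchi : ∀ y : Fin n × Fin ℓ → ZMod 2,
      chi2 (S ×ˢ (Finset.univ : Finset (Fin ℓ))) y = chi2 S (blockPar y) := by
    intro y
    rw [chi2, chi2, Finset.sum_product]
    rfl
  constructor
  · rw [Finset.card_product, Finset.card_univ, Fintype.card_fin]
    exact Nat.mul_le_mul_right ℓ hS
  · apply Finset.sum_eq_zero
    intro y hy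
    have hy' : g (blockPar y) ≠ chi2 (S ×ˢ Finset.univ) y := by
      simp only [Finset.mem_filter] at hy
      exact hy.2
    rw [hchi y] at hy'
    unfold parSub
    rw [hzero _ hy', zero_div]
end

section
/- Let D ⊆ 𝔽₂ⁿ be linearly independent, f : D → 𝔽₂, f^ext its linear extension to Span(D), ℓ ≥ 1, and let 𝒟 = Unif(Span(D))_{⊕ℓ}. Suppose χ_S for S ⊆ [ℓn] satisfies dist_𝒟(χ_S, (f^ext)_{⊕ℓ}) ≤ 1/2 − γ for some γ > 0. Let S⋆ ⊆ [n] be the set of block indices i such that S intersects the i-th block. Then |S⋆| ≤ |S| (indeed S must be block-complete so |S⋆| = |S|/ℓ), and χ_{S⋆}(y) = f(y) for every y ∈ D. -/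
open Finset
open scoped Classical

section MyHelpers

lemma zmod2_add_self (a : ZMod 2) : a + a = 0 := CharTwo.add_self_eq_zero a

/-- Cardinality of a fiber of blockPar. -/
lemma card_fiber {n ℓ : ℕ} (hℓ : 1 ≤ ℓ) (z : Fin n → ZMod 2) :
    (univ.filter (fun y : Fin n × Fin ℓ → ZMod 2 => blockPar y = z)).card
      = 2 ^ ((ℓ - 1) * n) := by
  set j₀ : Fin ℓ := ⟨0, hℓ⟩ with hj₀
  have key : (univ.filter (fun y : Fin n × Fin ℓ → ZMod 2 => blockPar y = z)).card
      = (univ : Finset ({p : Fin n × Fin ℓ // p.2 ≠ j₀} → ZMod 2)).card := by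
    apply Finset.card_nbij' (fun y p => y p.1)
      (fun g p => if h : p.2 = j₀ then
        z p.1 + ∑ q : {j : Fin ℓ // j ≠ j₀}, g ⟨(p.1, q.1), q.2⟩ else g ⟨p, h⟩)
    · intro a _; exact mem_univ _
    · intro g _
      simp only [Finset.mem_coe, mem_filter, mem_univ, true_and]
      funext i
      show (∑ j, _) = z i
      rw [Finset.sum_eq_sum_sdiff_singleton_add (Finset.mem_univ j₀)]
      have h1 : ∑ j ∈ univ \ {j₀},
          (if h : (i, j).2 = j₀ then
            z (i, j).1 + ∑ q : {j : Fin ℓ // j ≠ j₀}, g ⟨((i, j).1, q.1), q.2⟩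
          else g ⟨(i, j), h⟩)
          = ∑ q : {j : Fin ℓ // j ≠ j₀}, g ⟨(i, q.1), q.2⟩ := by
        rw [Finset.sum_subtype (p := fun j : Fin ℓ => j ≠ j₀) (univ \ {j₀})
          (by intro x; simp)]
        apply Finset.sum_congr rfl
        intro q _
        rw [dif_neg q.2]
      rw [h1]
      show (∑ q : {j : Fin ℓ // j ≠ j₀}, g ⟨(i, q.1), q.2⟩) +
        (if h : ((i, j₀) : Fin n × Fin ℓ).2 = j₀ then
          z i + ∑ q : {j : Fin ℓ // j ≠ j₀}, g ⟨(i, q.1), q.2⟩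
        else g ⟨(i, j₀), h⟩) = z i
      rw [dif_pos rfl, add_comm (z i), ← add_assoc, zmod2_add_self, zero_add]
    · intro y hy
      simp only [Finset.mem_coe, mem_filter, mem_univ, true_and] at hy
      funext p
      beta_reduce
      by_cases h : p.2 = j₀
      · rw [dif_pos h]
        have hp : p = (p.1, j₀) := by rw [← h]
        have hz : z p.1 = ∑ j, y (p.1, j) := by rw [← hy]; rfl
        have h1 : ∑ q : {j : Fin ℓ // j ≠ j₀}, y (p.1, q.1)
            = ∑ j ∈ univ \ {j₀}, y (p.1, j) := by
          rw [Finset.sum_subtype (p := fun j : Fin ℓ => j ≠ j₀) (univ \ {j₀})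
            (by intro x; simp)]
        rw [hz, Finset.sum_eq_sum_sdiff_singleton_add (Finset.mem_univ j₀), h1,
          add_comm _ (y (p.1, j₀)), add_assoc, zmod2_add_self, add_zero]
        conv_rhs => rw [hp]
      · rw [dif_neg h]
    · intro g _
      funext q
      obtain ⟨p, hp⟩ := q
      show (if h : p.2 = j₀ then
          z p.1 + ∑ q : {j : Fin ℓ // j ≠ j₀}, g ⟨(p.1, q.1), q.2⟩
        else g ⟨p, h⟩) = g ⟨p, hp⟩
      rw [dif_neg hp]
  rw [key, Finset.card_univ, Fintype.card_fun, ZMod.card]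
  congr 1
  have h2 : Fintype.card {p : Fin n × Fin ℓ // p.2 ≠ j₀}
      = (univ.filter (fun p : Fin n × Fin ℓ => p.2 ≠ j₀)).card := Fintype.card_subtype _
  rw [h2]
  have h3 : univ.filter (fun p : Fin n × Fin ℓ => p.2 ≠ j₀)
      = univ ×ˢ (univ.erase j₀) := by
    ext p; simp [Finset.mem_erase, and_comm]
  rw [h3, Finset.card_product, Finset.card_erase_of_mem (mem_univ _)]
  simp [Nat.mul_comm]

/-- Halving via involution. -/
lemma half_sum {α : Type*} [Fintype α] (μ : α → ℝ) (P : α → Prop)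
    [DecidablePred P]
    (φ : α → α) (hφφ : ∀ a, φ (φ a) = a) (hμ : ∀ a, μ (φ a) = μ a)
    (hP : ∀ a, P (φ a) ↔ ¬ P a) :
    ∑ a ∈ univ.filter P, μ a = ∑ a ∈ univ.filter (fun a => ¬ P a), μ a := by
  apply Finset.sum_nbij' φ φ
  · intro a ha
    simp only [mem_filter, mem_univ, true_and] at ha ⊢
    exact fun hc => (hP a).mp hc ha
  · intro a ha
    simp only [mem_filter, mem_univ, true_and] at ha ⊢
    exact (hP a).mpr ha
  · intro a _; exact hφφ a
  · intro a _; exact hφφ a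
  · intro a _; exact (hμ a).symm

lemma sum_flipI {β : Type*} [AddCommGroup β] (h2 : ∀ b : β, b + b = 0)
    {m : ℕ} (i₀ : Fin m) (g : Fin m → β) (I : Finset (Fin m)) :
    ∑ i ∈ (if i₀ ∈ I then I.erase i₀ else insert i₀ I), g i
      = (∑ i ∈ I, g i) + g i₀ := by
  have hneg : ∀ b : β, -b = b := by
    intro b; rw [neg_eq_iff_add_eq_zero]; exact h2 b
  by_cases h : i₀ ∈ I
  · rw [if_pos h, Finset.sum_erase_eq_sub h, sub_eq_add_neg, hneg]
  · rw [if_neg h, Finset.sum_insert h, add_comm]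

/-- Generic: an involution preserving the measure and flipping the event forces
the event probability to be exactly half of the total mass. -/
lemma contra_gen {α : Type*} [Fintype α] (μ : α → ℝ) (P : α → Prop)
    [DecidablePred P] (γ : ℝ)
    (hγ : 0 < γ) (htot : ∑ a, μ a = 1)
    (hdist : ∑ a ∈ univ.filter P, μ a ≤ 1 / 2 - γ)
    (φ : α → α) (hφφ : ∀ a, φ (φ a) = a) (hμ : ∀ a, μ (φ a) = μ a)
    (hP : ∀ a, P (φ a) ↔ ¬ P a) : False := by
  have hhalf := half_sum μ P φ hφφ hμ hP
  have hsplit := Finset.sum_filter_add_sum_filter_not univ P μ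
  rw [htot] at hsplit
  linarith

/-- Total mass of the distribution in stmt14 is 1. -/
lemma total_one {n m ℓ : ℕ} (hℓ : 1 ≤ ℓ) (x : Fin m → (Fin n → ZMod 2)) :
    ∑ a : Finset (Fin m) × (Fin n × Fin ℓ → ZMod 2),
      (if blockPar a.2 = ∑ i ∈ a.1, x i then (1 : ℝ) else 0)
        / (2 ^ m * 2 ^ ((ℓ - 1) * n)) = 1 := by
  have hI : ∀ I : Finset (Fin m),
      (∑ y : Fin n × Fin ℓ → ZMod 2,
        (if blockPar y = ∑ i ∈ I, x i then (1 : ℝ) else 0)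
          / (2 ^ m * 2 ^ ((ℓ - 1) * n)))
      = 1 / 2 ^ m := by
    intro I
    rw [← Finset.sum_div, Finset.sum_boole, card_fiber hℓ]
    push_cast
    rw [div_eq_div_iff (by positivity) (by positivity)]
    ring
  rw [Fintype.sum_prod_type]
  simp only
  rw [Finset.sum_congr rfl fun I _ => hI I, Finset.sum_const, Finset.card_univ,
    Fintype.card_finset, Fintype.card_fin, nsmul_eq_mul]
  push_cast
  field_simp

end MyHelpers
set_option maxHeartbeats 1000000 in
theorem stmt14 {n m ℓ : ℕ} (hℓ : 1 ≤ ℓ) (x : Fin m → (Fin n → ZMod 2))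
    (hx : LinearIndependent (ZMod 2) x) (f : Fin m → ZMod 2)
    (S : Finset (Fin n × Fin ℓ)) (γ : ℝ) (hγ : 0 < γ)
    (hdist : ∑ Iy ∈ Finset.univ.filter
        (fun Iy : Finset (Fin m) × (Fin n × Fin ℓ → ZMod 2) =>
          chi2 S Iy.2 ≠ ∑ i ∈ Iy.1, f i),
        (if blockPar Iy.2 = ∑ i ∈ Iy.1, x i then (1 : ℝ) else 0)
          / (2 ^ m * 2 ^ ((ℓ - 1) * n))
      ≤ 1 / 2 - γ) :
    S = (S.image Prod.fst) ×ˢ Finset.univ ∧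
    ℓ * (S.image Prod.fst).card = S.card ∧
    (S.image Prod.fst).card ≤ S.card ∧
    ∀ i, chi2 (S.image Prod.fst) (x i) = f i := by
  have habs1 : ∀ u v : ZMod 2, u + 1 ≠ v ↔ ¬ (u ≠ v) := by decide
  have habs2 : ∀ u v c : ZMod 2, u + (c + 1) ≠ v + c ↔ ¬ (u ≠ v) := by decide
  have hne2 : ∀ u v : ZMod 2, u ≠ v → u = v + 1 := by decide
  have htot := total_one (n := n) (m := m) hℓ x
  -- Step 1: block completeness
  have hsub : S ⊆ (S.image Prod.fst) ×ˢ Finset.univ := by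
    intro p hp
    rw [Finset.mem_product]
    exact ⟨Finset.mem_image_of_mem _ hp, mem_univ _⟩
  have hbc : S = (S.image Prod.fst) ×ˢ Finset.univ := by
    by_contra hne
    obtain ⟨p₂, hp₂mem, hp₂not⟩ := Finset.exists_of_ssubset (lt_of_le_of_ne hsub hne)
    obtain ⟨i₀, j₂⟩ := p₂
    rw [Finset.mem_product] at hp₂mem
    obtain ⟨q, hq, hq1⟩ := Finset.mem_image.mp hp₂mem.1
    set j₁ := q.2 with hj₁
    have hq1' : q.1 = i₀ := hq1
    have hq' : (i₀, j₁) ∈ S := by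
      have heq : ((i₀, j₁) : Fin n × Fin ℓ) = q := by
        rw [hj₁, ← hq1']
      rw [heq]; exact hq
    have hj : j₁ ≠ j₂ := by rintro rfl; exact hp₂not hq'
    set flip : (Fin n × Fin ℓ → ZMod 2) → (Fin n × Fin ℓ → ZMod 2) :=
      fun y p => if p = (i₀, j₁) ∨ p = (i₀, j₂) then y p + 1 else y p with hflipdef
    have hdecomp : ∀ (y : Fin n × Fin ℓ → ZMod 2) p, flip y p
        = y p + ((if p = (i₀, j₁) then (1 : ZMod 2) else 0)
          + (if p = (i₀, j₂) then 1 else 0)) := by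
      intro y p
      show (if p = (i₀, j₁) ∨ p = (i₀, j₂) then y p + 1 else y p) = _
      by_cases h1 : p = (i₀, j₁) <;> by_cases h2 : p = (i₀, j₂)
      · exfalso; rw [h1] at h2; exact hj (congrArg Prod.snd h2)
      all_goals simp [h1, h2, hj, Ne.symm hj]
    have hflip2 : ∀ y, flip (flip y) = y := by
      intro y; funext p
      show (if p = (i₀, j₁) ∨ p = (i₀, j₂) then flip y p + 1 else flip y p) = y p
      by_cases h : p = (i₀, j₁) ∨ p = (i₀, j₂)
      · rw [if_pos h]
        show (if p = (i₀, j₁) ∨ p = (i₀, j₂) then y p + 1 else y p) + 1 = y p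
        rw [if_pos h, add_assoc, show (1 : ZMod 2) + 1 = 0 by decide, add_zero]
      · rw [if_neg h]
        show (if p = (i₀, j₁) ∨ p = (i₀, j₂) then y p + 1 else y p) = y p
        rw [if_neg h]
    have hbp : ∀ y, blockPar (flip y) = blockPar y := by
      intro y; funext i
      show (∑ j, flip y (i, j)) = ∑ j, y (i, j)
      simp only [hdecomp]
      rw [Finset.sum_add_distrib, Finset.sum_add_distrib]
      have e1 : ∀ jj : Fin ℓ,
          (∑ j : Fin ℓ, if ((i, j) : Fin n × Fin ℓ) = (i₀, jj) then (1 : ZMod 2) else 0)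
          = if i = i₀ then 1 else 0 := by
        intro jj
        by_cases hi : i = i₀
        · subst hi
          simp
        · simp [Prod.mk.injEq, hi]
      rw [e1 j₁, e1 j₂]
      split_ifs with hi
      · rw [show (1 : ZMod 2) + 1 = 0 by decide, add_zero]
      · rw [add_zero, add_zero]
    have hchi : ∀ y, chi2 S (flip y) = chi2 S y + 1 := by
      intro y
      show (∑ p ∈ S, flip y p) = (∑ p ∈ S, y p) + 1
      simp only [hdecomp]
      rw [Finset.sum_add_distrib, Finset.sum_add_distrib,
        Finset.sum_ite_eq' S ((i₀, j₁) : Fin n × Fin ℓ) fun _ => (1 : ZMod 2),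
        Finset.sum_ite_eq' S ((i₀, j₂) : Fin n × Fin ℓ) fun _ => (1 : ZMod 2),
        if_pos hq', if_neg hp₂not, add_zero]
    refine contra_gen
      (fun Iy : Finset (Fin m) × (Fin n × Fin ℓ → ZMod 2) =>
        (if blockPar Iy.2 = ∑ i ∈ Iy.1, x i then (1 : ℝ) else 0)
          / (2 ^ m * 2 ^ ((ℓ - 1) * n)))
      (fun Iy : Finset (Fin m) × (Fin n × Fin ℓ → ZMod 2) =>
        chi2 S Iy.2 ≠ ∑ i ∈ Iy.1, f i)
      γ hγ htot hdist (fun a => (a.1, flip a.2)) ?_ ?_ ?_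
    · intro a
      show ((a.1, flip (flip a.2)) : Finset (Fin m) × (Fin n × Fin ℓ → ZMod 2)) = a
      rw [hflip2]
    · intro a
      show (if blockPar (flip a.2) = ∑ i ∈ a.1, x i then (1 : ℝ) else 0)
            / (2 ^ m * 2 ^ ((ℓ - 1) * n))
          = (if blockPar a.2 = ∑ i ∈ a.1, x i then (1 : ℝ) else 0)
            / (2 ^ m * 2 ^ ((ℓ - 1) * n))
      rw [hbp]
    · intro a
      show chi2 S (flip a.2) ≠ ∑ i ∈ a.1, f i
          ↔ ¬ (chi2 S a.2 ≠ ∑ i ∈ a.1, f i)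
      rw [hchi]
      exact habs1 _ _
  -- Step 2, 3: cardinalities
  have hcard : ℓ * (S.image Prod.fst).card = S.card := by
    conv_rhs => rw [hbc]
    rw [Finset.card_product, Finset.card_univ, Fintype.card_fin, Nat.mul_comm]
  refine ⟨hbc, hcard, ?_, ?_⟩
  · calc (S.image Prod.fst).card ≤ ℓ * (S.image Prod.fst).card :=
          Nat.le_mul_of_pos_left _ hℓ
      _ = S.card := hcard
  -- Step 4: parities agree
  by_contra hcon
  push_neg at hcon
  obtain ⟨i₀, hi₀⟩ := hcon
  set j₀ : Fin ℓ := ⟨0, hℓ⟩ with hj₀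
  set w : Fin n × Fin ℓ → ZMod 2 :=
    fun p => if p.2 = j₀ then x i₀ p.1 else 0 with hwdef
  have hww0 : w + w = 0 := funext fun p => zmod2_add_self _
  have hbpw : blockPar w = x i₀ := by
    funext i
    show (∑ j : Fin ℓ, if j = j₀ then x i₀ i else 0) = x i₀ i
    rw [Finset.sum_ite_eq' univ j₀ fun _ => x i₀ i, if_pos (mem_univ _)]
  have hbpadd : ∀ y : Fin n × Fin ℓ → ZMod 2,
      blockPar (y + w) = blockPar y + x i₀ := by
    intro y; funext i
    show (∑ j, (y (i, j) + w (i, j))) = (∑ j, y (i, j)) + x i₀ i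
    rw [Finset.sum_add_distrib]
    congr 1
    exact congrFun hbpw i
  have hchiw : chi2 S w = f i₀ + 1 := by
    have hbc' : chi2 S w = chi2 ((S.image Prod.fst) ×ˢ Finset.univ) w := by
      conv_lhs => rw [hbc]
    have h1 : chi2 ((S.image Prod.fst) ×ˢ (Finset.univ : Finset (Fin ℓ))) w
        = chi2 (S.image Prod.fst) (x i₀) := by
      show (∑ p ∈ (S.image Prod.fst) ×ˢ Finset.univ, w p) = ∑ i ∈ S.image Prod.fst, x i₀ i
      rw [Finset.sum_product]
      apply Finset.sum_congr rfl
      intro i _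
      show (∑ j : Fin ℓ, if j = j₀ then x i₀ i else 0) = x i₀ i
      rw [Finset.sum_ite_eq' univ j₀ fun _ => x i₀ i, if_pos (mem_univ _)]
    rw [hbc', h1]
    exact hne2 _ _ hi₀
  have hsumx : ∀ I : Finset (Fin m),
      ∑ i ∈ (if i₀ ∈ I then I.erase i₀ else insert i₀ I), x i
        = (∑ i ∈ I, x i) + x i₀ :=
    sum_flipI (fun b => funext fun i => zmod2_add_self (b i)) i₀ x
  have hsumf : ∀ I : Finset (Fin m),
      ∑ i ∈ (if i₀ ∈ I then I.erase i₀ else insert i₀ I), f i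
        = (∑ i ∈ I, f i) + f i₀ :=
    sum_flipI zmod2_add_self i₀ f
  have hflipI : ∀ I : Finset (Fin m),
      (if i₀ ∈ (if i₀ ∈ I then I.erase i₀ else insert i₀ I)
        then (if i₀ ∈ I then I.erase i₀ else insert i₀ I).erase i₀
        else insert i₀ (if i₀ ∈ I then I.erase i₀ else insert i₀ I)) = I := by
    intro I
    by_cases h : i₀ ∈ I
    · rw [if_pos h, if_neg (Finset.notMem_erase _ _), Finset.insert_erase h]
    · rw [if_neg h, if_pos (Finset.mem_insert_self _ _), Finset.erase_insert h]
  refine contra_gen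
    (fun Iy : Finset (Fin m) × (Fin n × Fin ℓ → ZMod 2) =>
      (if blockPar Iy.2 = ∑ i ∈ Iy.1, x i then (1 : ℝ) else 0)
        / (2 ^ m * 2 ^ ((ℓ - 1) * n)))
    (fun Iy : Finset (Fin m) × (Fin n × Fin ℓ → ZMod 2) =>
      chi2 S Iy.2 ≠ ∑ i ∈ Iy.1, f i)
    γ hγ htot hdist
    (fun a => ((if i₀ ∈ a.1 then a.1.erase i₀ else insert i₀ a.1), a.2 + w)) ?_ ?_ ?_
  · intro a
    show ((if i₀ ∈ (if i₀ ∈ a.1 then a.1.erase i₀ else insert i₀ a.1)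
        then (if i₀ ∈ a.1 then a.1.erase i₀ else insert i₀ a.1).erase i₀
        else insert i₀ (if i₀ ∈ a.1 then a.1.erase i₀ else insert i₀ a.1)),
      (a.2 + w) + w) = a
    rw [hflipI a.1, add_assoc, hww0, add_zero]
  · intro a
    show (if blockPar (a.2 + w)
          = ∑ i ∈ (if i₀ ∈ a.1 then a.1.erase i₀ else insert i₀ a.1), x i
          then (1 : ℝ) else 0) / (2 ^ m * 2 ^ ((ℓ - 1) * n))
        = (if blockPar a.2 = ∑ i ∈ a.1, x i then (1 : ℝ) else 0)
          / (2 ^ m * 2 ^ ((ℓ - 1) * n))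
    rw [hbpadd, hsumx]
    try simp only [add_left_inj]
  · intro a
    show chi2 S (a.2 + w)
        ≠ ∑ i ∈ (if i₀ ∈ a.1 then a.1.erase i₀ else insert i₀ a.1), f i
        ↔ ¬ (chi2 S a.2 ≠ ∑ i ∈ a.1, f i)
    have hch : chi2 S (a.2 + w) = chi2 S a.2 + (f i₀ + 1) := by
      show (∑ p ∈ S, (a.2 p + w p)) = (∑ p ∈ S, a.2 p) + (f i₀ + 1)
      rw [Finset.sum_add_distrib]
      exact congrArg (fun t => (∑ p ∈ S, a.2 p) + t) hchiw
    rw [hch, hsumf]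
    exact habs2 _ _ _
end
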